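/- Let R be a commutative Noetherian local ring, I an ideal, x1,...,xs a d-sequence generating an ideal J ⊆ I that is a reduction of I with I^(r+1) = J*I^r, and assume (x1,...,x_i) ∩ I^(r+1) = (x1,...,x_i)*I^r for all i = 1,...,s-1. Then for all i = 1,...,s: ((x1,...,x_{i-1}) : x_i) ∩ I^(r+1) = (x1,...,x_{i-1})*I^r. -/

import Mathlib

/-- The ideal generated by the first `i` elements of the sequence `x`. -/
def firstIdeal {R : Type*} [CommRing R] {s : ℕ} (x : Fin s → R) (i : ℕ) : Ideal R :=
  Ideal.span (x '' {j : Fin s | (j : ℕ) < i})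

lemma firstIdeal_le_span {R : Type*} [CommRing R] {s : ℕ} (x : Fin s → R) (i : ℕ) :
    firstIdeal x i ≤ Ideal.span (Set.range x) :=
  Ideal.span_mono (by intro a ⟨j, _, hj⟩; exact ⟨j, hj⟩)

lemma firstIdeal_zero {R : Type*} [CommRing R] {s : ℕ} (x : Fin s → R) :
    firstIdeal x 0 = ⊥ := by
  simp [firstIdeal, Set.eq_empty_iff_forall_notMem]

/-- `R` Noetherian local, `x1,…,xs` a d-sequence generating a
reduction `J ⊆ I` with `I^(r+1) = J*I^r`; if `(x1,…,x_i) ∩ I^(r+1) = (x1,…,x_i)*I^r`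
for `1 ≤ i ≤ s-1`, then `((x1,…,x_{i-1}) : x_i) ∩ I^(r+1) = (x1,…,x_{i-1})*I^r`
for all `1 ≤ i ≤ s`. -/
theorem stmt_9 {R : Type*} [CommRing R] [IsNoetherianRing R] [IsLocalRing R]
    (I J : Ideal R) (hJI : J ≤ I) (s : ℕ) (x : Fin s → R)
    (hgen : J = Ideal.span (Set.range x))
    (hd : ∀ i : ℕ, ∀ hi : i < s,
      (firstIdeal x i).colon (Ideal.span {x ⟨i, hi⟩}) ⊓ J = firstIdeal x i)
    (r : ℕ) (hred : I ^ (r + 1) = J * I ^ r)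
    (hVV : ∀ i : ℕ, 1 ≤ i → i ≤ s - 1 →
      firstIdeal x i ⊓ I ^ (r + 1) = firstIdeal x i * I ^ r) :
    ∀ i : ℕ, ∀ hi1 : 1 ≤ i, ∀ hi2 : i ≤ s,
      (firstIdeal x (i - 1)).colon (Ideal.span {x ⟨i - 1, by omega⟩}) ⊓ I ^ (r + 1) =
        firstIdeal x (i - 1) * I ^ r := by
  intro i hi1 hi2
  have hlt : i - 1 < s := by omega
  have hFJ : firstIdeal x (i - 1) ≤ J := hgen ▸ firstIdeal_le_span x (i - 1)
  apply le_antisymm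
  · intro a ha
    obtain ⟨hac, hap⟩ := ha
    have haJ : a ∈ J := by
      have : I ^ (r + 1) ≤ J := hred ▸ Ideal.mul_le_left
      exact this hap
    have haF : a ∈ firstIdeal x (i - 1) := by
      rw [← hd (i - 1) hlt]; exact ⟨hac, haJ⟩
    rcases Nat.eq_or_lt_of_le hi1 with h1 | h1
    · rw [← h1] at haF ⊢
      simp only [Nat.sub_self, firstIdeal_zero] at haF ⊢
      simp [Ideal.mem_bot.mp haF]
    · have := hVV (i - 1) (by omega) (by omega)
      rw [← this]
      exact ⟨haF, hap⟩
  · refine le_inf ?_ ?_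
    · refine le_trans Ideal.mul_le_left ?_
      intro a ha
      rw [Submodule.mem_colon]
      intro p hp
      exact Ideal.mul_mem_right p _ ha
    · calc firstIdeal x (i - 1) * I ^ r ≤ I * I ^ r :=
            Ideal.mul_mono_left (le_trans hFJ hJI)
        _ = I ^ (r + 1) := by ring
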